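/- Let r be a positive integer. In the ring Z[X]/(X^r − 1), the ideal generated by (the image of) Φ_r(X) is equal to the ideal generated by the set {(X^r − 1)/(X^d − 1) : d a divisor of r, d ≠ r}, and is also equal to the ideal generated by the subset {(X^r − 1)/(X^{r/ℓ} − 1) : ℓ a prime dividing r}. (Here (X^r − 1)/(X^d − 1) ∈ Z[X] for every divisor d of r.) -/

import Mathlib

open Polynomial Pointwise

lemma aux_order_charP {K : Type*} [Field K] {p : ℕ} [Fact p.Prime] [CharP K p] {e : ℕ}
    (he : 0 < e) {ζ : K} (hz : (cyclotomic e K).IsRoot ζ) : orderOf ζ = ordCompl[p] e := by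
  have hp : p.Prime := Fact.out
  have hpm : ¬ p ∣ ordCompl[p] e := Nat.not_dvd_ordCompl hp he.ne'
  have : NeZero ((ordCompl[p] e : ℕ) : K) := NeZero.of_not_dvd K hpm
  have hem : p ^ (e.factorization p) * ordCompl[p] e = e := Nat.ordProj_mul_ordCompl_eq_self e p
  rw [← hem] at hz
  exact (isRoot_cyclotomic_prime_pow_mul_iff_of_charP.mp hz).eq_orderOf.symm

lemma aux_order_charZero {K : Type*} [Field K] [CharZero K] {e : ℕ} (he : 0 < e) {ζ : K}
    (hz : (cyclotomic e K).IsRoot ζ) : orderOf ζ = e := by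
  have : NeZero ((e : ℕ) : K) := ⟨Nat.cast_ne_zero.mpr he.ne'⟩
  exact (isRoot_cyclotomic_iff.mp hz).eq_orderOf.symm

lemma aux_val {ℓ d r : ℕ} (hℓ : ℓ.Prime) (hℓr : ℓ ∣ r) (hr : 0 < r) (hd : d ∣ r)
    (hnd : ¬ d ∣ r / ℓ) : r.factorization ℓ ≤ d.factorization ℓ := by
  by_contra hlt
  push_neg at hlt
  apply hnd
  have hd0 : 0 < d := Nat.pos_of_dvd_of_pos hd hr
  rw [Nat.dvd_div_iff_mul_dvd hℓr,
    ← Nat.factorization_le_iff_dvd (Nat.mul_ne_zero hℓ.pos.ne' hd0.ne') hr.ne',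
    Nat.factorization_mul hℓ.pos.ne' hd0.ne', Finsupp.le_def]
  intro q
  rcases eq_or_ne q ℓ with rfl | hq
  · have hdr : d.factorization q ≤ r.factorization q := by
      exact (Nat.factorization_le_iff_dvd hd0.ne' hr.ne').mpr hd q
    simp only [Finsupp.add_apply, hℓ.factorization, Finsupp.single_eq_same]
    omega
  · have hdr : d.factorization q ≤ r.factorization q :=
      (Nat.factorization_le_iff_dvd hd0.ne' hr.ne').mpr hd q
    simp only [Finsupp.add_apply, hℓ.factorization, Finsupp.single_apply]
    rw [if_neg (Ne.symm hq)]
    omega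

lemma aux_final {r p n e : ℕ} (hp : p.Prime) (hr : 0 < r)
    (hes : e ∣ r) (hne : e ≠ r)
    (hcomp : ordCompl[p] e = n)
    (hpval : r.factorization p ≤ e.factorization p)
    (hval : ∀ ℓ : ℕ, ℓ.Prime → ℓ ∣ r → ℓ ≠ p → r.factorization ℓ ≤ n.factorization ℓ) :
    False := by
  refine hne (Nat.dvd_antisymm hes ?_)
  have he0 : e ≠ 0 := (Nat.pos_of_dvd_of_pos hes hr).ne'
  rw [← Nat.factorization_le_iff_dvd hr.ne' he0, Finsupp.le_def]
  intro q
  by_cases hq : q.Prime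
  · by_cases hqr : q ∣ r
    · rcases eq_or_ne q p with rfl | hqp
      · exact hpval
      · calc r.factorization q ≤ n.factorization q := hval q hq hqr hqp
          _ = (ordCompl[p] e).factorization q := by rw [hcomp]
          _ = e.factorization q := by rw [Nat.factorization_ordCompl, Finsupp.erase_ne hqp]
    · simp [Nat.factorization_eq_zero_of_not_dvd hqr]
  · simp [Nat.factorization_eq_zero_of_not_prime _ hq]

lemma aux_top (r : ℕ) (hr : 0 < r) :
    Ideal.span ({∏ e ∈ r.divisors.erase r, cyclotomic e ℤ} ∪
      (fun ℓ : ℕ => ∏ e ∈ (r.divisors \ (r / ℓ).divisors).erase r, cyclotomic e ℤ) ''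
        {ℓ : ℕ | ℓ.Prime ∧ ℓ ∣ r}) = ⊤ := by
  by_contra hT
  obtain ⟨m, hmax, hTm⟩ := Ideal.exists_le_maximal _ hT
  letI : Field (ℤ[X] ⧸ m) := Ideal.Quotient.field m
  set ζ : ℤ[X] ⧸ m := Ideal.Quotient.mk m X with hζ
  have haev : ∀ f : ℤ[X], aeval ζ f = Ideal.Quotient.mk m f := by
    intro f
    have h2 : ((aeval ζ : ℤ[X] →ₐ[ℤ] _) : ℤ[X] →+* _) = Ideal.Quotient.mk m :=
      Polynomial.ringHom_ext' (Subsingleton.elim _ _) (by simp [hζ])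
    exact DFunLike.congr_fun h2 f
  have hroot : ∀ s : Finset ℕ, (∏ e ∈ s, cyclotomic e ℤ) ∈ m →
      ∃ e ∈ s, (cyclotomic e (ℤ[X] ⧸ m)).IsRoot ζ := by
    intro s hs
    have h0 : ∏ e ∈ s, aeval ζ (cyclotomic e ℤ) = 0 := by
      rw [← map_prod, haev, Ideal.Quotient.eq_zero_iff_mem]; exact hs
    obtain ⟨e, hes, he0⟩ := Finset.prod_eq_zero_iff.mp h0
    refine ⟨e, hes, ?_⟩
    rwa [aeval_def, ← eval_map, map_cyclotomic] at he0
  have hq : (∏ e ∈ r.divisors.erase r, cyclotomic e ℤ) ∈ m :=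
    hTm (Ideal.subset_span (Or.inl rfl))
  obtain ⟨e, he, heroot⟩ := hroot _ hq
  rw [Finset.mem_erase, Nat.mem_divisors] at he
  have hH : ∀ ℓ : ℕ, ℓ.Prime → ℓ ∣ r → ∃ e', (e' ∣ r ∧ e' ≠ r ∧ ¬ e' ∣ r / ℓ) ∧
      (cyclotomic e' (ℤ[X] ⧸ m)).IsRoot ζ := by
    intro ℓ hℓ hℓr
    have hmem : (∏ e ∈ (r.divisors \ (r / ℓ).divisors).erase r, cyclotomic e ℤ) ∈ m :=
      hTm (Ideal.subset_span (Or.inr ⟨ℓ, ⟨hℓ, hℓr⟩, rfl⟩))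
    obtain ⟨e', he', hroot'⟩ := hroot _ hmem
    rw [Finset.mem_erase, Finset.mem_sdiff, Nat.mem_divisors, Nat.mem_divisors] at he'
    have hrl : r / ℓ ≠ 0 := (Nat.div_pos (Nat.le_of_dvd hr hℓr) hℓ.pos).ne'
    exact ⟨e', ⟨he'.2.1.1, he'.1, fun hdvd => he'.2.2 ⟨hdvd, hrl⟩⟩, hroot'⟩
  obtain hp | hp0 := CharP.char_is_prime_or_zero (ℤ[X] ⧸ m) (ringChar (ℤ[X] ⧸ m))
  · haveI : Fact (ringChar (ℤ[X] ⧸ m)).Prime := ⟨hp⟩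
    set p := ringChar (ℤ[X] ⧸ m) with hpdef
    set n := orderOf ζ with hndef
    have horder : ∀ e' : ℕ, 0 < e' → (cyclotomic e' (ℤ[X] ⧸ m)).IsRoot ζ →
        ordCompl[p] e' = n := fun e' h1 h2 => (aux_order_charP h1 h2).symm
    have hvalgen : ∀ ℓ : ℕ, ℓ.Prime → ℓ ∣ r → ℓ ≠ p →
        r.factorization ℓ ≤ n.factorization ℓ := by
      intro ℓ hℓ hℓr hℓp
      obtain ⟨e', ⟨hd, hne, hnd⟩, hrt⟩ := hH ℓ hℓ hℓr
      have h1 : r.factorization ℓ ≤ e'.factorization ℓ := aux_val hℓ hℓr hr hd hnd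
      have h2 : n = ordCompl[p] e' := (horder e' (Nat.pos_of_dvd_of_pos hd hr) hrt).symm
      rwa [h2, Nat.factorization_ordCompl, Finsupp.erase_ne hℓp]
    by_cases hpr : p ∣ r
    · obtain ⟨ep, ⟨hd, hne, hnd⟩, hrt⟩ := hH p hp hpr
      exact aux_final hp hr hd hne (horder ep (Nat.pos_of_dvd_of_pos hd hr) hrt)
        (aux_val hp hpr hr hd hnd) hvalgen
    · exact aux_final hp hr he.2.1 he.1 (horder e (Nat.pos_of_dvd_of_pos he.2.1 hr) heroot)
        (by simp [Nat.factorization_eq_zero_of_not_dvd hpr]) hvalgen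
  · haveI : CharP (ℤ[X] ⧸ m) 0 := hp0 ▸ ringChar.charP (ℤ[X] ⧸ m)
    haveI : CharZero (ℤ[X] ⧸ m) := CharP.charP_to_charZero _
    have hepos : 0 < e := Nat.pos_of_dvd_of_pos he.2.1 hr
    have hn : orderOf ζ = e := aux_order_charZero hepos heroot
    have hre : r / e ≠ 1 := by
      intro h1
      exact he.1 (by rw [Nat.eq_mul_of_div_eq_right he.2.1 h1, mul_one])
    obtain ⟨ℓ, hℓ, hℓre⟩ := Nat.exists_prime_and_dvd hre
    have hℓr : ℓ ∣ r := hℓre.trans (Nat.div_dvd_of_dvd he.2.1)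
    obtain ⟨e', ⟨hd', hne', hnd'⟩, hrt'⟩ := hH ℓ hℓ hℓr
    have hee : e' = e := by
      have h1 := aux_order_charZero (Nat.pos_of_dvd_of_pos hd' hr) hrt'
      rw [hn] at h1; exact h1.symm
    apply hnd'
    rw [hee, Nat.dvd_div_iff_mul_dvd hℓr, mul_comm]
    exact (Nat.dvd_div_iff_mul_dvd he.2.1).mp hℓre

lemma aux_divByMonic (r d : ℕ) (hr : 0 < r) (hd : d ∣ r) :
    ((X : ℤ[X]) ^ r - 1) /ₘ (X ^ d - 1) = ∏ e ∈ r.divisors \ d.divisors, cyclotomic e ℤ := by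
  have hd0 : 0 < d := Nat.pos_of_dvd_of_pos hd hr
  have key : ((X : ℤ[X]) ^ d - 1) * ∏ e ∈ r.divisors \ d.divisors, cyclotomic e ℤ
      = X ^ r - 1 := by
    rw [← prod_cyclotomic_eq_X_pow_sub_one hd0 ℤ, ← prod_cyclotomic_eq_X_pow_sub_one hr ℤ,
      mul_comm, Finset.prod_sdiff (Nat.divisors_subset_of_dvd hr.ne' hd)]
  rw [← key, mul_divByMonic_cancel_left]
  simpa using monic_X_pow_sub_C (1 : ℤ) hd0.ne'

lemma aux_mul_span {R : Type*} [CommRing R] {S : Set R} (a : R) (h1 : Ideal.span S = ⊤) :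
    a ∈ Ideal.span ((a * ·) '' S) := by
  have h2 : Ideal.span ({a} * S) = Ideal.span {a} * Ideal.span S :=
    (Ideal.span_mul_span' _ _).symm
  rw [Set.singleton_mul] at h2
  rw [h2, h1, Ideal.mul_top]
  exact Ideal.mem_span_singleton_self a

theorem stmt_8 (r : ℕ) (hr : 0 < r) :
    let R := ℤ[X] ⧸ Ideal.span {(X : ℤ[X]) ^ r - 1}
    let mk : ℤ[X] →+* R := Ideal.Quotient.mk (Ideal.span {(X : ℤ[X]) ^ r - 1})
    (Ideal.span {mk (cyclotomic r ℤ)} =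
      Ideal.span
        ((fun d : ℕ => mk ((X ^ r - 1) /ₘ (X ^ d - 1))) ''
          {d : ℕ | d ∣ r ∧ d ≠ r})) ∧
    (Ideal.span {mk (cyclotomic r ℤ)} =
      Ideal.span
        ((fun ℓ : ℕ => mk ((X ^ r - 1) /ₘ (X ^ (r / ℓ) - 1))) ''
          {ℓ : ℕ | ℓ.Prime ∧ ℓ ∣ r})) := by
  intro R mk
  have hq : cyclotomic r ℤ * (∏ e ∈ r.divisors.erase r, cyclotomic e ℤ)
      = (X : ℤ[X]) ^ r - 1 := by
    rw [Finset.mul_prod_erase r.divisors (fun e => cyclotomic e ℤ)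
      (Nat.mem_divisors_self r hr.ne')]
    exact prod_cyclotomic_eq_X_pow_sub_one hr ℤ
  have hrmem : ∀ d : ℕ, d ∣ r → d ≠ r → r ∈ r.divisors \ d.divisors := by
    intro d hd hne
    rw [Finset.mem_sdiff, Nat.mem_divisors, Nat.mem_divisors]
    exact ⟨⟨dvd_rfl, hr.ne'⟩, fun h => hne (Nat.dvd_antisymm hd h.1)⟩
  have hh : ∀ ℓ : ℕ, ℓ.Prime → ℓ ∣ r →
      cyclotomic r ℤ * (∏ e ∈ (r.divisors \ (r / ℓ).divisors).erase r, cyclotomic e ℤ)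
        = ((X : ℤ[X]) ^ r - 1) /ₘ (X ^ (r / ℓ) - 1) := by
    intro ℓ hℓ hℓr
    have hdne : r / ℓ ≠ r := (Nat.div_lt_self hr hℓ.one_lt).ne
    rw [aux_divByMonic r (r / ℓ) hr (Nat.div_dvd_of_dvd hℓr)]
    exact Finset.mul_prod_erase _ (fun e => cyclotomic e ℤ)
      (hrmem _ (Nat.div_dvd_of_dvd hℓr) hdne)
  set Sd : Set ℤ[X] :=
    (fun d : ℕ => ((X : ℤ[X]) ^ r - 1) /ₘ (X ^ d - 1)) '' {d : ℕ | d ∣ r ∧ d ≠ r} with hSd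
  set Sp : Set ℤ[X] :=
    (fun ℓ : ℕ => ((X : ℤ[X]) ^ r - 1) /ₘ (X ^ (r / ℓ) - 1)) ''
      {ℓ : ℕ | ℓ.Prime ∧ ℓ ∣ r} with hSp
  have hchain1 : Ideal.span {cyclotomic r ℤ}
      ≤ Ideal.span ({(X : ℤ[X]) ^ r - 1} ∪ Sp) := by
    rw [Ideal.span_singleton_le_iff_mem]
    have h1 := aux_mul_span (cyclotomic r ℤ) (aux_top r hr)
    refine Ideal.span_mono ?_ h1
    rintro x ⟨y, hy | ⟨ℓ, hℓ, rfl⟩, rfl⟩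
    · rw [Set.mem_singleton_iff] at hy
      subst hy
      rw [Set.mem_union, Set.mem_singleton_iff]
      exact Or.inl hq
    · rw [Set.mem_union]
      exact Or.inr ⟨ℓ, hℓ, (hh ℓ hℓ.1 hℓ.2).symm⟩
  have hchain2 : Sp ⊆ Sd := by
    rintro x ⟨ℓ, ⟨hℓ, hℓr⟩, rfl⟩
    exact ⟨r / ℓ, ⟨Nat.div_dvd_of_dvd hℓr, (Nat.div_lt_self hr hℓ.one_lt).ne⟩, rfl⟩
  have hchain3 : Ideal.span ({(X : ℤ[X]) ^ r - 1} ∪ Sd)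
      ≤ Ideal.span {cyclotomic r ℤ} := by
    rw [Ideal.span_le]
    rintro x (hx | ⟨d, ⟨hd, hdne⟩, rfl⟩)
    · rw [Set.mem_singleton_iff] at hx
      subst hx
      exact Ideal.mem_span_singleton.mpr ⟨_, hq.symm⟩
    · refine Ideal.mem_span_singleton.mpr ?_
      simp only []
      rw [aux_divByMonic r d hr hd]
      exact Finset.dvd_prod_of_mem (fun e => cyclotomic e ℤ) (hrmem d hd hdne)
  have heq1 : Ideal.span {cyclotomic r ℤ}
      = Ideal.span ({(X : ℤ[X]) ^ r - 1} ∪ Sd) :=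
    le_antisymm (hchain1.trans (Ideal.span_mono (Set.union_subset_union_right _ hchain2)))
      hchain3
  have heq2 : Ideal.span {cyclotomic r ℤ}
      = Ideal.span ({(X : ℤ[X]) ^ r - 1} ∪ Sp) :=
    le_antisymm hchain1
      ((Ideal.span_mono (Set.union_subset_union_right _ hchain2)).trans hchain3)
  have hmap : ∀ (S : Set ℤ[X]),
      Ideal.span {cyclotomic r ℤ} = Ideal.span ({(X : ℤ[X]) ^ r - 1} ∪ S) →
      Ideal.span {mk (cyclotomic r ℤ)} = Ideal.span (mk '' S) := by
    intro S h
    have h2 := congrArg (Ideal.map mk) h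
    rw [Ideal.map_span, Ideal.map_span, Set.image_singleton, Set.image_union,
      Set.image_singleton] at h2
    have h0 : mk ((X : ℤ[X]) ^ r - 1) = 0 :=
      Ideal.Quotient.eq_zero_iff_mem.mpr (Ideal.subset_span rfl)
    rw [h0, Set.singleton_union, Ideal.span_insert, Ideal.span_singleton_eq_bot.mpr rfl,
      bot_sup_eq] at h2
    exact h2
  constructor
  · have := hmap Sd heq1
    rwa [hSd, ← Set.image_comp] at this
  · have := hmap Sp heq2
    rwa [hSp, ← Set.image_comp] at this
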